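/- Let p_1, …, p_m in [0,1], strictly positive reals R̂_1, …, R̂_m, q in (0,1), and let H₀ ⊆ [m] be any subset (the null indices). With S = S(1, …, 1) the deterministically pruned selection set, the pointwise inequality #(S ∩ H₀) / max(1, |S|) ≤ Σ_{j in H₀} 1{p_j ≤ q·R̂_j/m} / R̂_j holds. -/
import Mathlib


/-- The pruning threshold `r*(λ) = max{r ∈ {0,…,m} : #{j : p_j ≤ q·R̂_j/m and λ_j·R̂_j ≤ r} ≥ r}`. -/
noncomputable def prunedThreshold (m : ℕ) (q : ℝ) (p R lam : Fin m → ℝ) : ℕ :=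
  Nat.findGreatest
    (fun r => r ≤ Set.ncard {j : Fin m | p j ≤ q * R j / m ∧ lam j * R j ≤ (r : ℝ)}) m

/-- The pruned selection set `S(λ) = {j : p_j ≤ q·R̂_j/m and λ_j·R̂_j ≤ r*(λ)}`. -/
noncomputable def prunedSet (m : ℕ) (q : ℝ) (p R lam : Fin m → ℝ) : Set (Fin m) :=
  {j : Fin m | p j ≤ q * R j / m ∧ lam j * R j ≤ (prunedThreshold m q p R lam : ℝ)}

/-- The BH index `r*_BH = max{r ∈ {0,…,m} : #{j : p_j ≤ q·r/m} ≥ r}`. -/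
noncomputable def bhThreshold (m : ℕ) (q : ℝ) (p : Fin m → ℝ) : ℕ :=
  Nat.findGreatest (fun r => r ≤ Set.ncard {j : Fin m | p j ≤ q * (r : ℝ) / m}) m

/-- The BH selection set `S_BH = {j : p_j ≤ q·r*_BH/m}`. -/
noncomputable def bhSet (m : ℕ) (q : ℝ) (p : Fin m → ℝ) : Set (Fin m) :=
  {j : Fin m | p j ≤ q * (bhThreshold m q p : ℝ) / m}

/-- Pointwise FDP bound for the deterministically pruned selection set:
for any set H₀ of null indices,
#(S ∩ H₀)/max(1,|S|) ≤ Σ_{j ∈ H₀} 1{p_j ≤ q·R̂_j/m}/R̂_j, where S = S(1,…,1). -/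
theorem pruned_fdp_le_sum
    (m : ℕ) (q : ℝ) (hq : q ∈ Set.Ioo (0 : ℝ) 1)
    (p : Fin m → ℝ) (hp : ∀ j, p j ∈ Set.Icc (0 : ℝ) 1)
    (R : Fin m → ℝ) (hR : ∀ j, 0 < R j)
    (H0 : Finset (Fin m)) :
    (Set.ncard (prunedSet m q p R (fun _ => 1) ∩ ↑H0) : ℝ) /
        ((max 1 (Set.ncard (prunedSet m q p R (fun _ => 1))) : ℕ) : ℝ)
      ≤ ∑ j ∈ H0,
          Set.indicator {j' : Fin m | p j' ≤ q * R j' / m} (fun j' => 1 / R j') j := by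
  classical
  set r := prunedThreshold m q p R (fun _ => 1) with hr
  set S := prunedSet m q p R (fun _ => 1) with hS
  -- r ≤ ncard S
  have hspec : r ≤ Set.ncard {j : Fin m | p j ≤ q * R j / m ∧ (fun _ : Fin m => (1:ℝ)) j * R j ≤ (r : ℝ)} := by
    rw [hr]
    unfold prunedThreshold
    exact Nat.findGreatest_spec
      (P := fun r' => r' ≤ Set.ncard {j : Fin m | p j ≤ q * R j / m ∧ (fun _ : Fin m => (1:ℝ)) j * R j ≤ (r' : ℝ)})
      (Nat.zero_le m) (by simp)
  have hSeq : S = {j : Fin m | p j ≤ q * R j / m ∧ (fun _ : Fin m => (1:ℝ)) j * R j ≤ (r : ℝ)} := rfl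
  have hrS : r ≤ Set.ncard S := by rw [hSeq]; exact hspec
  -- the intersection as a finset
  set F : Finset (Fin m) := H0.filter (fun j => p j ≤ q * R j / m ∧ (1:ℝ) * R j ≤ (r : ℝ)) with hF
  have hinter : S ∩ ↑H0 = ↑F := by
    ext j
    simp [hF, hS, prunedSet, hr, and_comm]
  rw [hinter, Set.ncard_coe_finset]
  -- RHS bound
  have hsum : (F.card : ℝ) / r ≤ ∑ j ∈ H0,
      Set.indicator {j' : Fin m | p j' ≤ q * R j' / m} (fun j' => 1 / R j') j := by
    have h1 : ∑ j ∈ H0, Set.indicator {j' : Fin m | p j' ≤ q * R j' / m} (fun j' => 1 / R j') j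
        ≥ ∑ j ∈ F, Set.indicator {j' : Fin m | p j' ≤ q * R j' / m} (fun j' => 1 / R j') j := by
      apply Finset.sum_le_sum_of_subset_of_nonneg (Finset.filter_subset _ _)
      intro j _ _
      apply Set.indicator_nonneg
      intro j' _
      exact div_nonneg zero_le_one (hR j').le
    refine le_trans ?_ h1
    have h2 : ∀ j ∈ F, (1:ℝ) / r ≤ Set.indicator {j' : Fin m | p j' ≤ q * R j' / m} (fun j' => 1 / R j') j := by
      intro j hj
      rw [hF, Finset.mem_filter] at hj
      obtain ⟨-, hpj, hRj⟩ := hj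
      have hjmem : j ∈ {j' : Fin m | p j' ≤ q * R j' / ↑m} := hpj
      rw [Set.indicator_of_mem hjmem]
      rw [one_mul] at hRj
      have h0 : (0:ℝ) < R j := hR j
      exact one_div_le_one_div_of_le h0 hRj
    calc (F.card : ℝ) / r = ∑ _j ∈ F, (1:ℝ) / r := by
          rw [Finset.sum_const, nsmul_eq_mul]; ring
      _ ≤ _ := Finset.sum_le_sum h2
  refine le_trans ?_ hsum
  -- LHS: card F / max(1, ncard S) ≤ card F / r
  rcases Nat.eq_zero_or_pos F.card with h0 | hpos
  · rw [h0]
    simp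
  · -- F nonempty ⇒ r ≥ 1
    obtain ⟨j, hj⟩ := Finset.card_pos.mp hpos
    rw [hF, Finset.mem_filter] at hj
    have hRj : R j ≤ (r : ℝ) := by linarith [hj.2.2]
    have hrpos : 0 < r := by
      by_contra h
      push_neg at h
      interval_cases r
      · simp at hRj; linarith [hR j]
    apply div_le_div_of_nonneg_left (by positivity) (by exact_mod_cast hrpos)
    have : r ≤ max 1 (Set.ncard S) := le_trans hrS (le_max_right _ _)
    exact_mod_cast this
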